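/- Suppose the primal problem defining Jₙ is feasible and let y*ₙ be an optimizer of the dual problem J̃ₙ. Then 0 ≤ Jₙ − J ≤ y*ₙ(A rₙ) − c₀(rₙ). If, in addition, there exists γ > 0 such that ‖(y(b₁),…,y(bₙ))‖_{R*} ≥ γ‖y‖_* for every y ∈ 𝕂* and γθ_P > ‖b‖, then 0 ≤ Jₙ − J ≤ (‖c₀‖ + θ_D‖A‖)·‖rₙ‖, where θ_D := 2θ_P‖c‖_{R*} / (γθ_P − ‖b‖) and ‖A‖ is the operator norm of A. -/

import Mathlib

/-- The dual norm on `ℝⁿ` induced by a norm `R` and the standard bilinear pairing. -/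
noncomputable def dualNormR {n : ℕ} (R : (Fin n → ℝ) → ℝ) (z : Fin n → ℝ) : ℝ :=
  sSup {t | ∃ α : Fin n → ℝ, R α ≤ 1 ∧ t = ∑ i, α i * z i}


section RNorm
variable {n : ℕ} {R : (Fin n → ℝ) → ℝ}

theorem R_zero (hRsmul : ∀ (a : ℝ) (α), R (a • α) = |a| * R α) : R 0 = 0 := by
  have := hRsmul 0 0; simpa using this

theorem R_neg (hRsmul : ∀ (a : ℝ) (α), R (a • α) = |a| * R α) (α : Fin n → ℝ) :
    R (-α) = R α := by
  have := hRsmul (-1) α; simpa using this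

theorem R_nonneg (hRtri : ∀ α β, R (α + β) ≤ R α + R β)
    (hRsmul : ∀ (a : ℝ) (α), R (a • α) = |a| * R α) (α : Fin n → ℝ) : 0 ≤ R α := by
  have h := hRtri α (-α)
  rw [add_neg_cancel, R_zero hRsmul, R_neg hRsmul] at h
  linarith

theorem R_sum (hRtri : ∀ α β, R (α + β) ≤ R α + R β)
    (hRsmul : ∀ (a : ℝ) (α), R (a • α) = |a| * R α)
    {ι : Type*} (s : Finset ι) (f : ι → Fin n → ℝ) :
    R (∑ i ∈ s, f i) ≤ ∑ i ∈ s, R (f i) := by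
  classical
  induction s using Finset.induction_on with
  | empty => simp [R_zero hRsmul]
  | insert _ _ h ih =>
      rename_i a s'
      rw [Finset.sum_insert h, Finset.sum_insert h]
      exact le_trans (hRtri _ _) (by linarith)

/-- upper bound: `R α ≤ C * ‖α‖` -/
theorem R_le (hRtri : ∀ α β, R (α + β) ≤ R α + R β)
    (hRsmul : ∀ (a : ℝ) (α), R (a • α) = |a| * R α) (α : Fin n → ℝ) :
    R α ≤ (∑ i, R (Pi.single i 1)) * ‖α‖ := by
  set e : Fin n → Fin n → ℝ := fun i => Pi.single i 1 with he
  have hα : α = ∑ i, α i • e i := by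
    funext j
    simp [he, Pi.single_apply, Finset.sum_apply, mul_comm]
  calc R α = R (∑ i, α i • e i) := by rw [← hα]
    _ ≤ ∑ i, R (α i • e i) := R_sum hRtri hRsmul _ _
    _ ≤ ∑ i : Fin n, ‖α‖ * R (e i) := by
        refine Finset.sum_le_sum fun i _ => ?_
        rw [hRsmul]
        have h1 : |α i| ≤ ‖α‖ := by
          simpa [Real.norm_eq_abs] using norm_le_pi_norm α i
        exact mul_le_mul_of_nonneg_right h1 (R_nonneg hRtri hRsmul _)
    _ = (∑ i, R (e i)) * ‖α‖ := by rw [Finset.sum_mul]; simp [mul_comm]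

theorem R_continuous (hRtri : ∀ α β, R (α + β) ≤ R α + R β)
    (hRsmul : ∀ (a : ℝ) (α), R (a • α) = |a| * R α) : Continuous R := by
  set C : ℝ := ∑ i, R (Pi.single i 1) with hC
  have key : ∀ α β : Fin n → ℝ, R α - R β ≤ C * ‖α - β‖ := by
    intro α β
    have h1 : R α ≤ R (α - β) + R β := by
      have := hRtri (α - β) β; simpa using this
    have h2 := R_le hRtri hRsmul (α - β)
    linarith
  rw [Metric.continuous_iff]
  intro α ε hε
  have hC0 : 0 ≤ C := Finset.sum_nonneg fun i _ => R_nonneg hRtri hRsmul _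
  refine ⟨ε / (C + 1), by positivity, fun β hβ => ?_⟩
  rw [Real.dist_eq, abs_lt]
  have h1 := key β α
  have h2 := key α β
  have h3 : ‖β - α‖ < ε / (C + 1) := by rwa [dist_eq_norm] at hβ
  have h4 : ‖α - β‖ = ‖β - α‖ := norm_sub_rev _ _
  have h5 : C * ‖β - α‖ ≤ C * (ε / (C+1)) := mul_le_mul_of_nonneg_left h3.le hC0
  have h6 : C * (ε / (C+1)) < ε := by
    rw [div_eq_inv_mul, ← mul_assoc]
    have : C * (C+1)⁻¹ < 1 := by
      rw [mul_inv_lt_iff₀ (by linarith)]; linarith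
    nlinarith
  constructor <;> nlinarith [h1, h2, h4.symm ▸ h5]

/-- The crucial lower bound: `m * ‖α‖ ≤ R α` for some `m > 0`. -/
theorem R_lower (hRtri : ∀ α β, R (α + β) ≤ R α + R β)
    (hRsmul : ∀ (a : ℝ) (α), R (a • α) = |a| * R α)
    (hRdef : ∀ α, R α = 0 → α = 0) :
    ∃ m : ℝ, 0 < m ∧ ∀ α, m * ‖α‖ ≤ R α := by
  rcases isEmpty_or_nonempty (Fin n) with h | h
  · refine ⟨1, one_pos, fun α => ?_⟩
    have : α = 0 := funext fun i => h.elim i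
    simp [this, R_zero hRsmul, R_nonneg]
  · have hsph : (Metric.sphere (0 : Fin n → ℝ) 1).Nonempty := by
      rw [NormedSpace.sphere_nonempty]; norm_num
    have hcomp : IsCompact (Metric.sphere (0 : Fin n → ℝ) 1) := isCompact_sphere 0 1
    obtain ⟨α₀, hα₀mem, hα₀min⟩ :=
      hcomp.exists_isMinOn hsph (R_continuous hRtri hRsmul).continuousOn
    have hα₀norm : ‖α₀‖ = 1 := by simpa using hα₀mem
    have hm : 0 < R α₀ := by
      rcases (R_nonneg hRtri hRsmul α₀).lt_or_eq with h | h
      · exact h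
      · exfalso
        have := hRdef α₀ h.symm
        rw [this] at hα₀norm; simp at hα₀norm
    refine ⟨R α₀, hm, fun α => ?_⟩
    rcases eq_or_ne α 0 with rfl | hne
    · simp [R_zero hRsmul]
    · have hn : (0:ℝ) < ‖α‖ := norm_pos_iff.2 hne
      have hu : ‖α‖⁻¹ • α ∈ Metric.sphere (0 : Fin n → ℝ) 1 := by
        simp [norm_smul, abs_of_pos (inv_pos.2 hn), inv_mul_cancel₀ hn.ne']
      have h1 : R α₀ ≤ R (‖α‖⁻¹ • α) := hα₀min hu
      rw [hRsmul, abs_of_pos (inv_pos.2 hn)] at h1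
      calc R α₀ * ‖α‖ ≤ ‖α‖⁻¹ * R α * ‖α‖ := mul_le_mul_of_nonneg_right h1 hn.le
        _ = R α := by field_simp

end RNorm



section DN
variable {n : ℕ} {R : (Fin n → ℝ) → ℝ}
  (hRtri : ∀ α β, R (α + β) ≤ R α + R β)
  (hRsmul : ∀ (a : ℝ) (α), R (a • α) = |a| * R α)
  (hRdef : ∀ α, R α = 0 → α = 0)

theorem R_zero' (hRsmul : ∀ (a : ℝ) (α : Fin n → ℝ), R (a • α) = |a| * R α) : R 0 = 0 := by
  have := hRsmul 0 0; simpa using this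

include hRsmul in
theorem dn_nonempty (z : Fin n → ℝ) :
    Set.Nonempty {t | ∃ α : Fin n → ℝ, R α ≤ 1 ∧ t = ∑ i, α i * z i} :=
  ⟨0, 0, by simp [R_zero' hRsmul], by simp⟩

include hRtri hRsmul hRdef in
theorem dn_bddAbove (z : Fin n → ℝ) :
    BddAbove {t | ∃ α : Fin n → ℝ, R α ≤ 1 ∧ t = ∑ i, α i * z i} := by
  obtain ⟨m, hm, hml⟩ := R_lower hRtri hRsmul hRdef
  refine ⟨m⁻¹ * ∑ i, |z i|, fun t ht => ?_⟩
  obtain ⟨α, hα, rfl⟩ := ht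
  have hαn : ‖α‖ ≤ m⁻¹ := by
    rw [← one_div]
    rw [le_div_iff₀ hm, mul_comm]
    linarith [hml α]
  calc ∑ i, α i * z i ≤ ∑ i, m⁻¹ * |z i| := by
        refine Finset.sum_le_sum fun i _ => ?_
        calc α i * z i ≤ |α i * z i| := le_abs_self _
          _ = |α i| * |z i| := abs_mul _ _
          _ ≤ m⁻¹ * |z i| := by
              refine mul_le_mul_of_nonneg_right ?_ (abs_nonneg _)
              exact le_trans (by simpa [Real.norm_eq_abs] using norm_le_pi_norm α i) hαn
    _ = m⁻¹ * ∑ i, |z i| := by rw [Finset.mul_sum]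

include hRtri hRsmul hRdef in
theorem le_dn {α : Fin n → ℝ} (hα : R α ≤ 1) (z : Fin n → ℝ) :
    ∑ i, α i * z i ≤ dualNormR R z :=
  le_csSup (dn_bddAbove hRtri hRsmul hRdef z) ⟨α, hα, rfl⟩

include hRsmul in
theorem dn_le {z : Fin n → ℝ} {t : ℝ} (h : ∀ α : Fin n → ℝ, R α ≤ 1 → ∑ i, α i * z i ≤ t) :
    dualNormR R z ≤ t := by
  refine csSup_le (dn_nonempty hRsmul z) fun b hb => ?_
  obtain ⟨α, hα, rfl⟩ := hb
  exact h α hα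

include hRtri hRsmul hRdef in
theorem dn_nonneg (z : Fin n → ℝ) : 0 ≤ dualNormR R z := by
  have := le_dn hRtri hRsmul hRdef (α := 0) (by simp [R_zero' hRsmul]) z
  simpa using this

include hRtri hRsmul hRdef in
theorem smul_le_dn {θP : ℝ} (hθP : 0 < θP) {α : Fin n → ℝ} (hα : R α ≤ θP) (z : Fin n → ℝ) :
    ∑ i, α i * z i ≤ θP * dualNormR R z := by
  have h1 : R (θP⁻¹ • α) ≤ 1 := by
    rw [hRsmul, abs_of_pos (inv_pos.2 hθP)]
    rw [inv_mul_le_iff₀ hθP]; simpa using hα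
  have h2 := le_dn hRtri hRsmul hRdef h1 z
  have h3 : ∑ i, (θP⁻¹ • α) i * z i = θP⁻¹ * ∑ i, α i * z i := by
    rw [Finset.mul_sum]; exact Finset.sum_congr rfl fun i _ => by simp [mul_assoc]
  rw [h3] at h2
  calc ∑ i, α i * z i = θP * (θP⁻¹ * ∑ i, α i * z i) := by field_simp
    _ ≤ θP * dualNormR R z := mul_le_mul_of_nonneg_left h2 hθP.le

include hRtri hRsmul hRdef in
theorem dn_neg (z : Fin n → ℝ) : dualNormR R (fun i => -(z i)) = dualNormR R z := by
  have key : ∀ w : Fin n → ℝ, dualNormR R (fun i => -(w i)) ≤ dualNormR R w := by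
    intro w
    refine dn_le hRsmul fun α hα => ?_
    have hα' : R (-α) ≤ 1 := by
      rw [show -α = (-1 : ℝ) • α by simp, hRsmul]
      simpa using hα
    have := le_dn hRtri hRsmul hRdef hα' w
    calc ∑ i, α i * -(w i) = ∑ i, (-α) i * w i := by
          refine Finset.sum_congr rfl fun i _ => by simp only [Pi.neg_apply]; ring
      _ ≤ dualNormR R w := this
  refine le_antisymm (key z) ?_
  have := key (fun i => -(z i))
  simpa using this

include hRtri hRsmul hRdef in
theorem dn_sub_le (z w : Fin n → ℝ) :
    dualNormR R z - dualNormR R w ≤ dualNormR R (fun i => z i - w i) := by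
  have h : dualNormR R z ≤ dualNormR R (fun i => z i - w i) + dualNormR R w := by
    refine dn_le hRsmul fun α hα => ?_
    have h1 := le_dn hRtri hRsmul hRdef hα (fun i => z i - w i)
    have h2 := le_dn hRtri hRsmul hRdef hα w
    have : ∑ i, α i * z i = (∑ i, α i * (z i - w i)) + ∑ i, α i * w i := by
      rw [← Finset.sum_add_distrib]; exact Finset.sum_congr rfl fun i _ => by ring
    linarith
  linarith

end DN


theorem cone_sep {B : Type*} [NormedAddCommGroup B] [NormedSpace ℝ B]
    {K : Set B} (hKclosed : IsClosed K) (hKconvex : Convex ℝ K)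
    (hKcone : ∀ t : ℝ, 0 ≤ t → ∀ v ∈ K, t • v ∈ K) (hK0 : (0:B) ∈ K)
    {v : B} (hv : v ∉ K) :
    ∃ y : B →L[ℝ] ℝ, (∀ w ∈ K, 0 ≤ y w) ∧ y v < 0 := by
  obtain ⟨f, u, hfv, hf⟩ := geometric_hahn_banach_point_closed hKconvex hKclosed hv
  have hu0 : u < 0 := by have := hf 0 hK0; simpa using this
  refine ⟨f, fun w hw => ?_, by linarith⟩
  by_contra hneg
  push_neg at hneg
  set t : ℝ := (|u| + 1) / (-(f w)) with ht
  have hfw : 0 < -(f w) := by linarith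
  have ht0 : 0 ≤ t := by positivity
  have h1 := hf (t • w) (hKcone t ht0 w hw)
  rw [map_smul, smul_eq_mul] at h1
  have h2 : t * f w = -(|u| + 1) := by
    rw [ht, div_mul_eq_mul_div, div_eq_iff hfw.ne']
    ring
  nlinarith [neg_abs_le u]

theorem finite_minimax {E : Type*} [NormedAddCommGroup E] [NormedSpace ℝ E]
    {S : Set E} (hSc : Convex ℝ S) (hSne : S.Nonempty)
    {ι : Type*} (u : Finset ι) (f : ι → E →L[ℝ] ℝ) (d : ι → ℝ) (t : ℝ)
    (h : ∀ α ∈ S, ∃ j ∈ u, t < f j α + d j) :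
    ∃ lam : ι → ℝ, (∀ j, 0 ≤ lam j) ∧ (∑ j ∈ u, lam j = 1) ∧
      ∀ α ∈ S, t ≤ ∑ j ∈ u, lam j * (f j α + d j) := by
  classical
  -- the image-space set
  set T : Set (↥u → ℝ) := {z | ∃ α ∈ S, ∀ j : ↥u, f j α + d j ≤ z j} with hT
  set O : Set (↥u → ℝ) := {z | ∀ j : ↥u, z j < t} with hO
  have hOopen : IsOpen O := by
    have : O = Set.pi Set.univ (fun _ : ↥u => Set.Iio t) := by
      ext z; simp [hO, Set.mem_pi]
    rw [this]
    exact isOpen_set_pi Set.finite_univ fun _ _ => isOpen_Iio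
  have hOconv : Convex ℝ O := by
    have : O = Set.pi Set.univ (fun _ : ↥u => Set.Iio t) := by
      ext z; simp [hO, Set.mem_pi]
    rw [this]
    exact convex_pi fun _ _ => convex_Iio t
  have hTconv : Convex ℝ T := by
    rintro z hz w hw a b ha hb hab
    obtain ⟨α, hα, hzα⟩ := hz
    obtain ⟨β, hβ, hwβ⟩ := hw
    refine ⟨a • α + b • β, hSc hα hβ ha hb hab, fun j => ?_⟩
    have h1 := hzα j
    have h2 := hwβ j
    have : f j (a • α + b • β) + d j = a * (f j α + d j) + b * (f j β + d j) := by
      rw [map_add, map_smul, map_smul, smul_eq_mul, smul_eq_mul]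
      linear_combination (-(d j.1)) * hab
    rw [this]
    have := add_le_add (mul_le_mul_of_nonneg_left h1 ha) (mul_le_mul_of_nonneg_left h2 hb)
    simpa using this
  have hdisj : Disjoint O T := by
    rw [Set.disjoint_left]
    rintro z hzO ⟨α, hα, hzα⟩
    obtain ⟨j, hj, hjt⟩ := h α hα
    exact absurd ((hzα ⟨j, hj⟩).trans (hzO ⟨j, hj⟩).le) (not_le.2 hjt)
  obtain ⟨φ, s, hφO, hφT⟩ := geometric_hahn_banach_open hOconv hOopen hTconv hdisj
  obtain ⟨α₀, hα₀⟩ := hSne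
  have hz₀T : (fun j : ↥u => f j α₀ + d j) ∈ T := ⟨α₀, hα₀, fun j => le_rfl⟩
  set z₀ : ↥u → ℝ := fun j => f j α₀ + d j with hz₀
  -- basis vectors
  set e : ↥u → ↥u → ℝ := fun i j => if i = j then 1 else 0 with he
  have hrep : ∀ z : ↥u → ℝ, φ z = ∑ j : ↥u, z j * φ (e j) := by
    intro z
    have hz : z = ∑ j : ↥u, z j • e j := pi_eq_sum_univ z
    calc φ z = φ (∑ j : ↥u, z j • e j) := by rw [← hz]
      _ = ∑ j : ↥u, z j * φ (e j) := by
            rw [map_sum]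
            exact Finset.sum_congr rfl fun j _ => by rw [map_smul, smul_eq_mul]
  -- nonnegativity of coefficients
  have hlam0 : ∀ j : ↥u, 0 ≤ φ (e j) := by
    intro j
    by_contra hneg
    push_neg at hneg
    set r : ℝ := (φ z₀ - s + 1) / (-(φ (e j))) with hr
    have hs0 : s ≤ φ z₀ := hφT z₀ hz₀T
    have hrpos : 0 < r := by
      apply div_pos (by linarith) (by linarith)
    have hmem : z₀ + r • e j ∈ T := by
      refine ⟨α₀, hα₀, fun i => ?_⟩
      have hge : (0:ℝ) ≤ (r • e j) i := by
        rcases eq_or_ne j i with rfl | hne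
        · simp [he, hrpos.le]
        · simp [he, hne]
      have hz₀i : z₀ i = f i α₀ + d i := rfl
      simp only [Pi.add_apply]
      linarith [hge, hz₀i]
    have := hφT _ hmem
    rw [map_add, map_smul, smul_eq_mul] at this
    have hcalc : r * φ (e j) = -(φ z₀ - s + 1) := by
      rw [hr]
      field_simp [hneg.ne]
    rw [hcalc] at this
    linarith
  set σ : ℝ := ∑ j : ↥u, φ (e j) with hσ
  have hσ0 : 0 ≤ σ := Finset.sum_nonneg fun j _ => hlam0 j
  have hσpos : 0 < σ := by
    rcases hσ0.lt_or_eq with h' | h'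
    · exact h'
    · exfalso
      have hall : ∀ j : ↥u, φ (e j) = 0 := by
        have := (Finset.sum_eq_zero_iff_of_nonneg (fun j _ => hlam0 j)).1 h'.symm
        exact fun j => this j (Finset.mem_univ j)
      have hφ0 : ∀ z, φ z = 0 := by
        intro z; rw [hrep z]; simp [hall]
      have hw : (fun _ : ↥u => t - 1) ∈ O := fun j => by norm_num
      have h1 : (0:ℝ) < s := by have := hφO _ hw; rwa [hφ0] at this
      have h2 : s ≤ 0 := by have := hφT z₀ hz₀T; rwa [hφ0] at this
      linarith
  have htσ : t * σ ≤ s := by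
    by_contra hcon
    push_neg at hcon
    set ε : ℝ := (t * σ - s) / (2 * σ) with hε
    have hεpos : 0 < ε := by apply div_pos (by linarith) (by linarith)
    have hw : (fun _ : ↥u => t - ε) ∈ O := fun j => by simp; linarith
    have h1 := hφO _ hw
    rw [hrep] at h1
    have h2 : ∑ j : ↥u, (t - ε) * φ (e j) = (t - ε) * σ := by
      rw [hσ, Finset.mul_sum]
    rw [h2] at h1
    have : (t - ε) * σ = t * σ - ε * σ := by ring
    have hεσ : ε * σ = (t * σ - s) / 2 := by
      rw [hε]; field_simp
    nlinarith
  -- define the weights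
  set lamh : ι → ℝ := fun j => if hj : j ∈ u then φ (e ⟨j, hj⟩) else 0 with hlamh
  have hsum : ∑ j ∈ u, lamh j = σ := by
    rw [hσ, Finset.univ_eq_attach, ← Finset.sum_attach u lamh]
    exact Finset.sum_congr rfl fun j _ => by simp [hlamh, j.2]
  refine ⟨fun j => lamh j / σ, fun j => ?_, ?_, fun α hα => ?_⟩
  · rcases Decidable.em (j ∈ u) with hj | hj
    · simp only [hlamh, dif_pos hj]
      exact div_nonneg (hlam0 _) hσ0
    · simp [hlamh, dif_neg hj]
  · rw [← Finset.sum_div, hsum, div_self hσpos.ne']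
  · have hmem : (fun j : ↥u => f j α + d j) ∈ T := ⟨α, hα, fun j => le_rfl⟩
    have h1 := hφT _ hmem
    rw [hrep] at h1
    have h2 : ∑ j ∈ u, lamh j / σ * (f j α + d j)
        = (∑ j : ↥u, (f j α + d j) * φ (e j)) / σ := by
      rw [Finset.univ_eq_attach, ← Finset.sum_attach u (fun j => lamh j / σ * (f j α + d j)),
        Finset.sum_div]
      exact Finset.sum_congr rfl fun j _ => by
        simp only [hlamh, dif_pos j.2]
        ring
    rw [h2, le_div_iff₀ hσpos]
    calc t * σ ≤ s := htσ
      _ ≤ ∑ j : ↥u, (f j α + d j) * φ (e j) := h1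

theorem strong_dual_step
    {B : Type*} [NormedAddCommGroup B] [NormedSpace ℝ B]
    {K : Set B} (hKclosed : IsClosed K) (hKconvex : Convex ℝ K)
    (hKcone : ∀ t : ℝ, 0 ≤ t → ∀ v ∈ K, t • v ∈ K) (hK0 : (0:B) ∈ K)
    (b0 : B) {n : ℕ} (bv : Fin n → B) (c : Fin n → ℝ)
    {R : (Fin n → ℝ) → ℝ}
    (hRtri : ∀ α β, R (α + β) ≤ R α + R β)
    (hRsmul : ∀ (a : ℝ) (α), R (a • α) = |a| * R α)
    (hRdef : ∀ α, R α = 0 → α = 0)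
    {θP : ℝ} (hθP : 0 < θP)
    {Jn : ℝ}
    (hJnle : ∀ α : Fin n → ℝ, R α ≤ θP → (∑ i, α i • bv i) - b0 ∈ K → Jn ≤ ∑ i, α i * c i)
    {t : ℝ} (ht : t < Jn) :
    ∃ y : B →L[ℝ] ℝ, (∀ v ∈ K, 0 ≤ y v) ∧
      ∀ α : Fin n → ℝ, R α ≤ θP → t ≤ (∑ i, α i * c i) - y ((∑ i, α i • bv i) - b0) := by
  classical
  set Sball : Set (Fin n → ℝ) := {α | R α ≤ θP} with hSball
  obtain ⟨m, hm, hml⟩ := R_lower hRtri hRsmul hRdef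
  have hSclosed : IsClosed Sball := isClosed_Iic.preimage (R_continuous hRtri hRsmul)
  have hSbdd : Bornology.IsBounded Sball := by
    apply (Metric.isBounded_closedBall (x := (0 : Fin n → ℝ)) (r := θP / m)).subset
    intro α hα
    rw [Metric.mem_closedBall, dist_zero_right]
    rw [le_div_iff₀ hm, mul_comm]
    exact le_trans (hml α) hα
  have hScomp : IsCompact Sball := Metric.isCompact_of_isClosed_isBounded hSclosed hSbdd
  have hSconv : Convex ℝ Sball := by
    rintro α hα β hβ a b ha hb hab
    have h1 : R (a • α + b • β) ≤ R (a • α) + R (b • β) := hRtri _ _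
    rw [hRsmul, hRsmul, abs_of_nonneg ha, abs_of_nonneg hb] at h1
    have hα' : R α ≤ θP := hα
    have hβ' : R β ≤ θP := hβ
    show R (a • α + b • β) ≤ θP
    nlinarith [h1]
  -- the linear part of the Lagrangian, as a continuous linear map
  set g : (B →L[ℝ] ℝ) → ((Fin n → ℝ) →L[ℝ] ℝ) := fun y => LinearMap.toContinuousLinearMap
    { toFun := fun α => (∑ i, α i * c i) - y (∑ i, α i • bv i)
      map_add' := by
        intro α β
        simp only [Pi.add_apply, add_mul, add_smul, Finset.sum_add_distrib, map_add]
        ring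
      map_smul' := by
        intro a α
        simp only [Pi.smul_apply, smul_eq_mul, mul_assoc, ← Finset.mul_sum, ← smul_smul,
          ← Finset.smul_sum, map_smul, RingHom.id_apply]
        ring } with hgdef
  have hg : ∀ (y : B →L[ℝ] ℝ) (α : Fin n → ℝ),
      g y α = (∑ i, α i * c i) - y (∑ i, α i • bv i) := fun y α => rfl
  have hID : ∀ (y : B →L[ℝ] ℝ) (α : Fin n → ℝ),
      g y α + y b0 = (∑ i, α i * c i) - y ((∑ i, α i • bv i) - b0) := by
    intro y α
    rw [hg, map_sub]
    ring
  set Z : {y : B →L[ℝ] ℝ // ∀ v ∈ K, 0 ≤ y v} → Set (Fin n → ℝ) :=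
    fun y => (fun α => g y.1 α + y.1 b0) ⁻¹' (Set.Iic t) with hZdef
  have hZmem : ∀ y α, α ∈ Z y ↔
      (∑ i, α i * c i) - y.1 ((∑ i, α i • bv i) - b0) ≤ t := by
    intro y α
    rw [hZdef]
    simp only [Set.mem_preimage, Set.mem_Iic, hID]
  have hZclosed : ∀ y, IsClosed (Z y) := fun y =>
    isClosed_Iic.preimage ((g y.1).continuous.add continuous_const)
  have hempty : Sball ∩ ⋂ y, Z y = ∅ := by
    rw [Set.eq_empty_iff_forall_notMem]
    rintro α ⟨hαS, hαZ⟩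
    rw [Set.mem_iInter] at hαZ
    have hq : (∑ i, α i * c i) ≤ t := by
      have h0K : ∀ v ∈ K, 0 ≤ (0 : B →L[ℝ] ℝ) v := fun v _ => by simp
      have := (hZmem ⟨0, h0K⟩ α).1 (hαZ ⟨0, h0K⟩)
      simpa using this
    by_cases hv : (∑ i, α i • bv i) - b0 ∈ K
    · have := hJnle α hαS hv
      linarith
    · obtain ⟨y0, hy0K, hy0v⟩ := cone_sep hKclosed hKconvex hKcone hK0 hv
      set q := ∑ i, α i * c i with hqdef
      set w := (∑ i, α i • bv i) - b0 with hwdef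
      set r := (t - q + 1) / (-(y0 w)) with hrdef
      have hr : 0 < r := div_pos (by linarith) (by linarith)
      have hyK : ∀ v ∈ K, 0 ≤ (r • y0) v := fun v hv' => by
        rw [ContinuousLinearMap.smul_apply, smul_eq_mul]
        exact mul_nonneg hr.le (hy0K v hv')
      have h1 := (hZmem ⟨r • y0, hyK⟩ α).1 (hαZ ⟨r • y0, hyK⟩)
      rw [ContinuousLinearMap.smul_apply, smul_eq_mul] at h1
      have h2 : r * y0 w = -(t - q + 1) := by
        rw [hrdef]
        field_simp [hy0v.ne]
      rw [h2] at h1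
      linarith
  obtain ⟨u, hu⟩ := hScomp.elim_finite_subfamily_closed Z hZclosed hempty
  have hcover : ∀ α ∈ Sball, ∃ j ∈ u,
      t < (∑ i, α i * c i) - j.1 ((∑ i, α i • bv i) - b0) := by
    intro α hα
    by_contra hcon
    push_neg at hcon
    have hmem : α ∈ Sball ∩ ⋂ j ∈ u, Z j := by
      refine ⟨hα, ?_⟩
      rw [Set.mem_iInter₂]
      intro j hj
      exact (hZmem j α).2 (hcon j hj)
    rw [hu] at hmem
    exact hmem
  have hSne : Sball.Nonempty := ⟨0, by
    show R 0 ≤ θP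
    rw [R_zero' hRsmul]
    exact hθP.le⟩
  obtain ⟨lam, hlam0, hlamsum, hlam⟩ := finite_minimax hSconv hSne
    u (fun j : {y : B →L[ℝ] ℝ // ∀ v ∈ K, 0 ≤ y v} => g j.1) (fun j => j.1 b0) t
    (by
      intro α hα
      obtain ⟨j, hj, hjt⟩ := hcover α hα
      exact ⟨j, hj, by rw [hID]; exact hjt⟩)
  set Y : B →L[ℝ] ℝ := ∑ j ∈ u, lam j • (j.1 : B →L[ℝ] ℝ) with hY
  have hYapp : ∀ v : B, Y v = ∑ j ∈ u, lam j * j.1 v := by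
    intro v
    rw [hY]
    simp [ContinuousLinearMap.sum_apply]
  refine ⟨Y, fun v hv => ?_, fun α hα => ?_⟩
  · rw [hYapp]
    exact Finset.sum_nonneg fun j hj => mul_nonneg (hlam0 j) (j.2 v hv)
  · have h1 := hlam α hα
    have h2 : ∑ j ∈ u, lam j * (g j.1 α + j.1 b0)
        = (∑ i, α i * c i) - Y ((∑ i, α i • bv i) - b0) := by
      have e1 : ∀ j ∈ u, lam j * (g j.1 α + j.1 b0)
          = lam j * (∑ i, α i * c i) - lam j * j.1 ((∑ i, α i • bv i) - b0) := by
        intro j _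
        rw [hID]
        ring
      rw [Finset.sum_congr rfl e1, Finset.sum_sub_distrib, ← Finset.sum_mul, hlamsum, one_mul,
        hYapp]
    rw [h2] at h1
    exact h1


set_option maxHeartbeats 1000000 in
theorem stmt1
    {X : Type*} [NormedAddCommGroup X] [NormedSpace ℝ X]
    {B : Type*} [NormedAddCommGroup B] [NormedSpace ℝ B]
    (c0 : X →L[ℝ] ℝ) (A : X →L[ℝ] B)
    (K : Set B) (hKclosed : IsClosed K) (hKconvex : Convex ℝ K)
    (hKcone : ∀ t : ℝ, 0 ≤ t → ∀ v ∈ K, t • v ∈ K)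
    (b0 : B)
    -- the infinite LP attains a minimizer x*
    (xstar : X) (hxfeas : A xstar - b0 ∈ K)
    (hxmin : ∀ x : X, A x - b0 ∈ K → c0 xstar ≤ c0 x)
    (J : ℝ) (hJ : J = c0 xstar)
    -- linearly independent normalized elements
    {n : ℕ} (x : Fin n → X) (hli : LinearIndependent ℝ x) (hnorm : ∀ i, ‖x i‖ = 1)
    -- a norm on ℝⁿ
    (R : (Fin n → ℝ) → ℝ)
    (hRtri : ∀ α β, R (α + β) ≤ R α + R β)
    (hRsmul : ∀ (a : ℝ) (α), R (a • α) = |a| * R α)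
    (hRdef : ∀ α, R α = 0 → α = 0)
    (θP : ℝ) (hθP : 0 < θP)
    -- semi-infinite primal and dual values
    (Jn Jtn : ℝ)
    (hJn : Jn = sInf {t | ∃ α : Fin n → ℝ,
      R α ≤ θP ∧ (∑ i, α i • A (x i)) - b0 ∈ K ∧ t = ∑ i, α i * c0 (x i)})
    (hJtn : Jtn = sSup {t | ∃ y : B →L[ℝ] ℝ, (∀ v ∈ K, 0 ≤ y v) ∧
      t = y b0 - θP * dualNormR R (fun i => y (A (x i)) - c0 (x i))})
    -- feasibility of the semi-infinite primal
    (hfeas : ∃ α : Fin n → ℝ, R α ≤ θP ∧ (∑ i, α i • A (x i)) - b0 ∈ K)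
    -- projection of x* onto the ball B_n and its residual
    (px : X) (hpxmem : ∃ α : Fin n → ℝ, R α ≤ θP ∧ px = ∑ i, α i • x i)
    (hpxmin : ∀ v : X, (∃ α : Fin n → ℝ, R α ≤ θP ∧ v = ∑ i, α i • x i) →
      ‖xstar - px‖ ≤ ‖xstar - v‖)
    (rn : X) (hrn : rn = xstar - px)
    -- an optimizer of the dual problem
    (ystar : B →L[ℝ] ℝ) (hystarK : ∀ v ∈ K, 0 ≤ ystar v)
    (hystaropt : ystar b0 - θP * dualNormR R (fun i => ystar (A (x i)) - c0 (x i)) = Jtn) :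
    (0 ≤ Jn - J ∧ Jn - J ≤ ystar (A rn) - c0 rn) ∧
      ∀ γ : ℝ, 0 < γ →
        (∀ y : B →L[ℝ] ℝ, (∀ v ∈ K, 0 ≤ y v) →
          γ * ‖y‖ ≤ dualNormR R (fun i => y (A (x i)))) →
        ‖b0‖ < γ * θP →
        Jn - J ≤
          (‖c0‖ +
            (2 * θP * dualNormR R (fun i => c0 (x i)) / (γ * θP - ‖b0‖)) * ‖A‖) * ‖rn‖ := by

  classical
  obtain ⟨α0, hα0R, hα0K⟩ := hfeas
  have hK0 : (0:B) ∈ K := by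
    have := hKcone 0 le_rfl _ hxfeas
    simpa using this
  set P : Set ℝ := {t | ∃ α : Fin n → ℝ,
      R α ≤ θP ∧ (∑ i, α i • A (x i)) - b0 ∈ K ∧ t = ∑ i, α i * c0 (x i)} with hP
  set D : Set ℝ := {t | ∃ y : B →L[ℝ] ℝ, (∀ v ∈ K, 0 ≤ y v) ∧
      t = y b0 - θP * dualNormR R (fun i => y (A (x i)) - c0 (x i))} with hD
  have hc0sum : ∀ α : Fin n → ℝ, c0 (∑ i, α i • x i) = ∑ i, α i * c0 (x i) := by
    intro α
    rw [map_sum]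
    exact Finset.sum_congr rfl fun i _ => by rw [map_smul, smul_eq_mul]
  have hAsum : ∀ α : Fin n → ℝ, A (∑ i, α i • x i) = ∑ i, α i • A (x i) := by
    intro α
    rw [map_sum]
    exact Finset.sum_congr rfl fun i _ => by rw [map_smul]
  have hPlb : ∀ p ∈ P, J ≤ p := by
    rintro p ⟨α, hαR, hαK, rfl⟩
    rw [← hc0sum, hJ]
    apply hxmin
    rw [hAsum]
    exact hαK
  have hPne : P.Nonempty := ⟨∑ i, α0 i * c0 (x i), α0, hα0R, hα0K, rfl⟩
  have hJnJ : J ≤ Jn := by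
    rw [hJn]; exact le_csInf hPne hPlb
  have hJnle : ∀ α : Fin n → ℝ, R α ≤ θP → (∑ i, α i • A (x i)) - b0 ∈ K →
      Jn ≤ ∑ i, α i * c0 (x i) := by
    intro α h1 h2
    rw [hJn]
    exact csInf_le ⟨J, hPlb⟩ ⟨α, h1, h2, rfl⟩
  -- weak duality
  have hweak : ∀ d ∈ D, ∀ p ∈ P, d ≤ p := by
    rintro d ⟨y, hyK, rfl⟩ p ⟨α, hαR, hαK, rfl⟩
    have h1 : ∑ i, α i * (y (A (x i)) - c0 (x i))
        ≤ θP * dualNormR R (fun i => y (A (x i)) - c0 (x i)) :=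
      smul_le_dn hRtri hRsmul hRdef hθP hαR _
    have h2 : y ((∑ i, α i • A (x i)) - b0) = (∑ i, α i * y (A (x i))) - y b0 := by
      rw [map_sub, map_sum]
      congr 1
      exact Finset.sum_congr rfl fun i _ => by rw [map_smul, smul_eq_mul]
    have h3 : 0 ≤ y ((∑ i, α i • A (x i)) - b0) := hyK _ hαK
    have h4 : ∑ i, α i * (y (A (x i)) - c0 (x i))
        = (∑ i, α i * y (A (x i))) - ∑ i, α i * c0 (x i) := by
      rw [← Finset.sum_sub_distrib]
      exact Finset.sum_congr rfl fun i _ => by ring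
    rw [h2] at h3
    linarith
  have hDbdd : BddAbove D :=
    ⟨∑ i, α0 i * c0 (x i), fun d hd => hweak d hd _ ⟨α0, hα0R, hα0K, rfl⟩⟩
  set dnstar : ℝ := dualNormR R (fun i => ystar (A (x i)) - c0 (x i)) with hdnstar
  set V : ℝ := ystar b0 - θP * dnstar with hV
  -- strong duality : Jn ≤ V
  have hJnV : Jn ≤ V := by
    by_contra hcon
    push_neg at hcon
    set t : ℝ := (V + Jn)/2 with htdef
    have ht1 : t < Jn := by rw [htdef]; linarith
    have ht2 : V < t := by rw [htdef]; linarith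
    obtain ⟨Y, hYK, hYineq⟩ := strong_dual_step hKclosed hKconvex hKcone hK0 b0
      (fun i => A (x i)) (fun i => c0 (x i)) hRtri hRsmul hRdef hθP hJnle ht1
    have hdn : dualNormR R (fun i => Y (A (x i)) - c0 (x i)) ≤ (Y b0 - t)/θP := by
      apply dn_le hRsmul
      intro α hα1
      have hα' : R (θP • α) ≤ θP := by
        rw [hRsmul, abs_of_pos hθP]
        nlinarith
      have h5 := hYineq (θP • α) hα'
      have h6 : Y ((∑ i, (θP • α) i • A (x i)) - b0)
          = θP * (∑ i, α i * Y (A (x i))) - Y b0 := by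
        rw [map_sub, map_sum, Finset.mul_sum]
        congr 1
        refine Finset.sum_congr rfl fun i _ => ?_
        rw [Pi.smul_apply, smul_eq_mul, mul_smul, map_smul, map_smul]
        simp [mul_assoc]
      have h7 : ∑ i, (θP • α) i * c0 (x i) = θP * ∑ i, α i * c0 (x i) := by
        rw [Finset.mul_sum]
        refine Finset.sum_congr rfl fun i _ => ?_
        rw [Pi.smul_apply, smul_eq_mul]
        ring
      rw [h6, h7] at h5
      have h8 : ∑ i, α i * (Y (A (x i)) - c0 (x i))
          = (∑ i, α i * Y (A (x i))) - ∑ i, α i * c0 (x i) := by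
        rw [← Finset.sum_sub_distrib]
        exact Finset.sum_congr rfl fun i _ => by ring
      rw [h8, le_div_iff₀ hθP]
      nlinarith
    have h9 : θP * dualNormR R (fun i => Y (A (x i)) - c0 (x i)) ≤ Y b0 - t := by
      have := mul_le_mul_of_nonneg_left hdn hθP.le
      calc θP * dualNormR R (fun i => Y (A (x i)) - c0 (x i))
          ≤ θP * ((Y b0 - t)/θP) := this
        _ = Y b0 - t := by field_simp
    have h10 : Y b0 - θP * dualNormR R (fun i => Y (A (x i)) - c0 (x i)) ∈ D :=
      ⟨Y, hYK, rfl⟩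
    have h11 := le_csSup hDbdd h10
    rw [← hJtn, ← hystaropt] at h11
    linarith
  -- bound V from above by the projection point
  obtain ⟨ah, hahR, hpx⟩ := hpxmem
  have h1 : ∑ i, ah i * (ystar (A (x i)) - c0 (x i)) ≤ θP * dnstar := by
    rw [hdnstar]
    exact smul_le_dn hRtri hRsmul hRdef hθP hahR _
  have h2 : ystar (A px) = ∑ i, ah i * ystar (A (x i)) := by
    rw [hpx, hAsum, map_sum]
    exact Finset.sum_congr rfl fun i _ => by rw [map_smul, smul_eq_mul]
  have h3 : c0 px = ∑ i, ah i * c0 (x i) := by rw [hpx, hc0sum]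
  have h4 : ∑ i, ah i * (ystar (A (x i)) - c0 (x i))
      = (∑ i, ah i * ystar (A (x i))) - ∑ i, ah i * c0 (x i) := by
    rw [← Finset.sum_sub_distrib]
    exact Finset.sum_congr rfl fun i _ => by ring
  have hfeasY : 0 ≤ ystar (A xstar) - ystar b0 := by
    have := hystarK _ hxfeas
    rwa [map_sub] at this
  have hArn : ystar (A rn) = ystar (A xstar) - ystar (A px) := by
    rw [hrn, map_sub, map_sub]
  have hc0rn : c0 rn = c0 xstar - c0 px := by rw [hrn, map_sub]
  have hpart1 : Jn - J ≤ ystar (A rn) - c0 rn := by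
    rw [hArn, hc0rn, hJ]
    have hVle : V ≤ (∑ i, ah i * c0 (x i)) - (∑ i, ah i * ystar (A (x i))) + ystar b0 := by
      rw [hV]
      linarith
    linarith
  refine ⟨⟨by linarith, hpart1⟩, ?_⟩
  intro γ hγ hγb hb0
  set dnc : ℝ := dualNormR R (fun i => c0 (x i)) with hdnc
  have hdnc0 : 0 ≤ dnc := dn_nonneg hRtri hRsmul hRdef _
  have h0D : -(θP * dnc) ∈ D := by
    refine ⟨0, fun v _ => by simp, ?_⟩
    have heq : (fun i => (0 : B →L[ℝ] ℝ) (A (x i)) - c0 (x i))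
        = (fun i => -(c0 (x i))) := by
      funext i; simp
    rw [heq, dn_neg hRtri hRsmul hRdef]
    simp [hdnc]
  have h0V : -(θP * dnc) ≤ V := by
    have := le_csSup hDbdd h0D
    rw [← hJtn, ← hystaropt] at this
    exact this
  have hsub : dualNormR R (fun i => ystar (A (x i))) - dnc ≤ dnstar := by
    rw [hdnstar, hdnc]
    exact dn_sub_le hRtri hRsmul hRdef _ _
  have hgb := hγb ystar hystarK
  have hyb0 : ystar b0 ≤ ‖ystar‖ * ‖b0‖ := by
    have := ystar.le_opNorm b0
    rw [Real.norm_eq_abs] at this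
    exact (le_abs_self _).trans this
  have hd2 : γ * ‖ystar‖ - dnc ≤ dnstar := by linarith
  have hd3 : θP * (γ * ‖ystar‖ - dnc) ≤ θP * dnstar :=
    mul_le_mul_of_nonneg_left hd2 hθP.le
  have hθD : ‖ystar‖ * (γ * θP - ‖b0‖) ≤ 2 * θP * dnc := by
    have hVval : V = ystar b0 - θP * dnstar := hV
    nlinarith [hd3, h0V, hyb0]
  have hden : 0 < γ * θP - ‖b0‖ := by linarith
  have hnormy : ‖ystar‖ ≤ 2 * θP * dnc / (γ * θP - ‖b0‖) := by
    rw [le_div_iff₀ hden]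
    exact hθD
  have hAern : ystar (A rn) ≤ ‖ystar‖ * (‖A‖ * ‖rn‖) := by
    have e1 := ystar.le_opNorm (A rn)
    rw [Real.norm_eq_abs] at e1
    have e2 : ‖A rn‖ ≤ ‖A‖ * ‖rn‖ := A.le_opNorm rn
    have e3 : ‖ystar‖ * ‖A rn‖ ≤ ‖ystar‖ * (‖A‖ * ‖rn‖) :=
      mul_le_mul_of_nonneg_left e2 (norm_nonneg _)
    exact (le_abs_self _).trans (e1.trans e3)
  have hc0rnb : -(c0 rn) ≤ ‖c0‖ * ‖rn‖ := by
    have e1 := c0.le_opNorm rn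
    rw [Real.norm_eq_abs] at e1
    exact (neg_le_abs _).trans e1
  have hy0 : 0 ≤ ‖ystar‖ := norm_nonneg _
  have hAnn : 0 ≤ ‖A‖ * ‖rn‖ := mul_nonneg (norm_nonneg _) (norm_nonneg _)
  calc Jn - J ≤ ystar (A rn) - c0 rn := hpart1
    _ ≤ ‖ystar‖ * (‖A‖ * ‖rn‖) + ‖c0‖ * ‖rn‖ := by linarith
    _ ≤ (2 * θP * dnc / (γ * θP - ‖b0‖)) * (‖A‖ * ‖rn‖) + ‖c0‖ * ‖rn‖ := by nlinarith
    _ = (‖c0‖ + (2 * θP * dnc / (γ * θP - ‖b0‖)) * ‖A‖) * ‖rn‖ := by ring
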